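/- Let φ be a four-dimensional nilpotent complex Jordan algebra with basis {e₁,e₂,e₃,e₄} satisfying φ(e₁,e₁)=e₂, φ(e₁,e₂)=e₃, φ(e₁,e₃)=e₄, and with e₄ in the center. Then φ(e₂,e₂)=e₄, φ(e₂,e₃)=0, and φ(e₃,e₃)=0; hence φ is uniquely determined. -/

import Mathlib

/-- Bilinearity of a plain product. -/
def IsBilin (K : Type*) [Field K] {V : Type*} [AddCommGroup V] [Module K V]
    (φ : V → V → V) : Prop :=
  (∀ (a : K) (x y z : V), φ (a • x + y) z = a • φ x z + φ y z) ∧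
  (∀ (a : K) (x y z : V), φ x (a • y + z) = a • φ x y + φ x z)

/-- Commutativity (symmetry) of the product. -/
def IsComm {V : Type*} (φ : V → V → V) : Prop := ∀ x y, φ x y = φ y x

/-- The Jordan identity. -/
def JordanId {V : Type*} (φ : V → V → V) : Prop :=
  ∀ x y, φ (φ x x) (φ x y) = φ x (φ (φ x x) y)

/-- Lower central series: `lcs K φ 0 = C¹ = V`, and `lcs K φ m` is the term `C^{m+1}`. -/
def lcs (K : Type*) [Field K] {V : Type*} [AddCommGroup V] [Module K V]
    (φ : V → V → V) : ℕ → Submodule K V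
  | 0 => ⊤
  | m + 1 => Submodule.span K {z | ∃ x ∈ lcs K φ m, ∃ y, z = φ x y}

/-- Nilpotency: some term of the lower central series vanishes. -/
def IsNilp (K : Type*) [Field K] {V : Type*} [AddCommGroup V] [Module K V]
    (φ : V → V → V) : Prop := ∃ k, lcs K φ k = ⊥
/-- in a 4-dimensional nilpotent complex Jordan algebra with
φ(e₁,e₁)=e₂, φ(e₁,e₂)=e₃, φ(e₁,e₃)=e₄ and e₄ central, one has
φ(e₂,e₂)=e₄, φ(e₂,e₃)=0 and φ(e₃,e₃)=0. -/
theorem dim_four_max_char_seq_structure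
    {V : Type*} [AddCommGroup V] [Module ℂ V] (φ : V → V → V)
    (hbil : IsBilin ℂ φ) (hcomm : IsComm φ) (hjord : JordanId φ)
    (hnilp : IsNilp ℂ φ) (e : Module.Basis (Fin 4) ℂ V)
    (h11 : φ (e 0) (e 0) = e 1) (h12 : φ (e 0) (e 1) = e 2) (h13 : φ (e 0) (e 2) = e 3)
    (hcen : ∀ y : V, φ (e 3) y = 0) :
    φ (e 1) (e 1) = e 3 ∧ φ (e 1) (e 2) = 0 ∧ φ (e 2) (e 2) = 0 := by
  obtain ⟨hl, hr⟩ := hbil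
  have haddl : ∀ x y z : V, φ (x + y) z = φ x z + φ y z := by
    intro x y z
    have := hl 1 x y z; simpa using this
  have haddr : ∀ x y z : V, φ x (y + z) = φ x y + φ x z := by
    intro x y z
    have := hr 1 x y z; simpa using this
  have hzl : ∀ z : V, φ 0 z = 0 := by
    intro z
    have := haddl 0 0 z
    rw [add_zero] at this
    exact left_eq_add.mp this
  have hsml : ∀ (a : ℂ) (x z : V), φ (a • x) z = a • φ x z := by
    intro a x z
    have := hl a x 0 z
    simpa [hzl] using this
  have hnegl : ∀ x z : V, φ (-x) z = -(φ x z) := by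
    intro x z
    have := hsml (-1) x z
    simpa using this
  have hnegr : ∀ x z : V, φ x (-z) = -(φ x z) := by
    intro x z
    rw [hcomm, hnegl, hcomm]
  have hcen' : ∀ y : V, φ y (e 3) = 0 := fun y => (hcomm y (e 3)).trans (hcen y)
  have h21 : φ (e 1) (e 0) = e 2 := (hcomm _ _).trans h12
  have h31 : φ (e 2) (e 0) = e 3 := (hcomm _ _).trans h13
  -- Step 1: φ e1 e1 = e3
  have h22 : φ (e 1) (e 1) = e 3 := by
    have := hjord (e 0) (e 0)
    rw [h11, h21, h13] at this
    exact this
  -- Step 2: φ e1 e2 = 0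
  have h23 : φ (e 1) (e 2) = 0 := by
    have := hjord (e 0) (e 1)
    rw [h11, h12, h22, hcen'] at this
    exact this
  have h32 : φ (e 2) (e 1) = 0 := (hcomm _ _).trans h23
  refine ⟨h22, h23, ?_⟩
  -- Step 3: use Jordan at e0 + e1 and e0 - e1 with y = e1
  have E1 := hjord (e 0 + e 1) (e 1)
  have E2 := hjord (e 0 - e 1) (e 1)
  simp only [sub_eq_add_neg, haddl, haddr, hnegl, hnegr, h11, h12, h13, h21, h22, h23, h31,
    h32, hcen, hcen', neg_zero, add_zero, zero_add, neg_neg, neg_add_rev] at E1 E2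
  -- E1 : φ e2 e2 + φ e2 e3 + (φ e2 e2 + φ e2 e3) ... = 0, similarly E2 with signs
  have : (2 : ℂ) • φ (e 2) (e 2) = 0 := by
    rw [two_smul]; exact E1
  simpa using smul_eq_zero.mp this
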